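/- Verification of the coercivity assumption for weak boundary conditions (Section 4.1.2): Let H be a real inner product space and P : H → H an orthogonal projection (P is linear, P ∘ P = P, and ⟨P x, y⟩ = ⟨x, P y⟩ for all x, y ∈ H). Let c > 0, let x ∈ H and let g ≥ 0 be a real number satisfying the approximation bound ‖x − P x‖_H ≤ c·g. Then for every δ > 0, g² + δ·⟨P x, x⟩_H ≥ (1 − c²·δ)·g² + (δ/2)·‖x‖²_H. In particular, for δ < c⁻² the right-hand side controls both g² and ‖x‖²_H with positive constants. -/
import Mathlib


open scoped RealInnerProductSpace

/-- **Verification of the coercivity assumption for weak boundary conditions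
(Section 4.1.2).**
If `P` is an orthogonal projection on a real inner product space `H`, `c > 0`, `g ≥ 0` and
`‖x − P x‖ ≤ c g`, then for every `δ > 0`,
`g² + δ ⟪P x, x⟫ ≥ (1 − c² δ) g² + (δ/2) ‖x‖²`. -/
theorem coercivity_weak_boundary_conditions
    {H : Type*} [NormedAddCommGroup H] [InnerProductSpace ℝ H]
    (P : H →ₗ[ℝ] H)
    (hP_idem : P ∘ₗ P = P)
    (hP_sa : ∀ x y : H, ⟪P x, y⟫ = ⟪x, P y⟫)
    (c : ℝ) (hc : 0 < c) (x : H) (g : ℝ) (hg : 0 ≤ g)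
    (happrox : ‖x - P x‖ ≤ c * g) :
    ∀ δ > 0, (1 - c ^ 2 * δ) * g ^ 2 + (δ / 2) * ‖x‖ ^ 2 ≤ g ^ 2 + δ * ⟪P x, x⟫ := by
  intro δ hδ
  have hPP : P (P x) = P x := by simpa using LinearMap.congr_fun hP_idem x
  have h1 : ⟪P x, x⟫ = ‖P x‖ ^ 2 := by
    rw [← hPP, hP_sa, hPP, real_inner_self_eq_norm_sq]
  have h2 : ‖x - P x‖ ^ 2 = ‖x‖ ^ 2 - ‖P x‖ ^ 2 := by
    have e : ⟪x, P x⟫ = ‖P x‖ ^ 2 := by rw [← hP_sa, h1]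
    rw [← real_inner_self_eq_norm_sq, ← real_inner_self_eq_norm_sq,
      ← real_inner_self_eq_norm_sq] at *
    simp only [inner_sub_sub_self]
    have := real_inner_comm x (P x)
    linarith
  have h3 : ‖x - P x‖ ^ 2 ≤ (c * g) ^ 2 := by
    have := norm_nonneg (x - P x)
    nlinarith
  have h4 : (0:ℝ) ≤ ‖P x‖ ^ 2 := by positivity
  rw [h1]
  nlinarith
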